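/- Let G be a graph with all degrees odd and bounded by d, admitting a summable d-legal edge weighting. Then under synchronous majority dynamics, for every vertex i there exists T such that A^i_{t+2} = A^i_t for all t ≥ T; i.e., every opinion sequence is eventually periodic with period at most two. -/

import Mathlib

lemma odd_pm_sum_ne_zero {V : Type*} (s : Finset V) (a : V → ℤ)
    (ha : ∀ j ∈ s, a j = 1 ∨ a j = -1) (hodd : Odd s.card) :
    ∑ j ∈ s, a j ≠ 0 := by
  intro h0
  have hmod : (∑ j ∈ s, a j) % 2 = (∑ j ∈ s, (a j % 2)) % 2 := Finset.sum_int_mod s 2 a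
  have h1 : ∀ j ∈ s, a j % 2 = 1 := by
    intro j hj; rcases ha j hj with h | h <;> rw [h] <;> decide
  rw [Finset.sum_congr rfl h1] at hmod
  simp only [Finset.sum_const, nsmul_eq_mul, mul_one] at hmod
  rw [h0] at hmod
  have : (s.card : ℤ) % 2 = 1 := Int.odd_iff.mp (by exact_mod_cast hodd)
  omega

lemma weighted_majority_bound {V : Type*} (s : Finset V) (w : V → ℝ) (a : V → ℤ)
    (zm zM : ℝ) (hzm : 0 ≤ zm) (hmm : zm ≤ zM)
    (hmin : ∀ j ∈ s, zm ≤ w j) (hmax : ∀ j ∈ s, w j ≤ zM)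
    (ha : ∀ j ∈ s, a j = 1 ∨ a j = -1)
    (hpos : 0 < ∑ j ∈ s, a j) :
    (((s.card : ℝ) + 1) * zm - ((s.card : ℝ) - 1) * zM) / 2 ≤
      ∑ j ∈ s, w j * (a j : ℝ) := by
  classical
  set P := s.filter (fun j => a j = 1) with hP
  set M := s.filter (fun j => ¬ a j = 1) with hM
  have hMneg : ∀ j ∈ M, a j = -1 := by
    intro j hj
    rcases Finset.mem_filter.mp hj with ⟨hjs, hj1⟩
    rcases ha j hjs with h | h
    · exact absurd h hj1
    · exact h
  have hcard : P.card + M.card = s.card :=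
    Finset.card_filter_add_card_filter_not (p := fun j => a j = 1)
  have hsplit : ∑ j ∈ s, a j = ∑ j ∈ P, a j + ∑ j ∈ M, a j :=
    (Finset.sum_filter_add_sum_filter_not s _ _).symm
  have hPsum : ∑ j ∈ P, a j = P.card := by
    rw [Finset.sum_congr rfl (fun j hj => (Finset.mem_filter.mp hj).2)]
    simp
    rfl
  have hMsum : ∑ j ∈ M, a j = -M.card := by
    rw [Finset.sum_congr rfl (fun j hj => hMneg j hj)]
    simp
  have hpq : (M.card : ℤ) + 1 ≤ P.card := by
    rw [hsplit, hPsum, hMsum] at hpos; omega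
  have hsplit2 : ∑ j ∈ s, w j * (a j : ℝ) =
      ∑ j ∈ P, w j * (a j : ℝ) + ∑ j ∈ M, w j * (a j : ℝ) :=
    (Finset.sum_filter_add_sum_filter_not s _ _).symm
  have hPsum2 : ∑ j ∈ P, w j * (a j : ℝ) = ∑ j ∈ P, w j := by
    refine Finset.sum_congr rfl fun j hj => ?_
    rw [(Finset.mem_filter.mp hj).2]; push_cast; ring
  have hMsum2 : ∑ j ∈ M, w j * (a j : ℝ) = -∑ j ∈ M, w j := by
    rw [← Finset.sum_neg_distrib]
    refine Finset.sum_congr rfl fun j hj => ?_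
    rw [hMneg j hj]; push_cast; ring
  have hPlb : (P.card : ℝ) * zm ≤ ∑ j ∈ P, w j := by
    have := Finset.card_nsmul_le_sum P w zm
      (fun j hj => hmin j (Finset.filter_subset _ _ hj))
    simpa [nsmul_eq_mul] using this
  have hMub : ∑ j ∈ M, w j ≤ (M.card : ℝ) * zM := by
    have := Finset.sum_le_card_nsmul M w zM
      (fun j hj => hmax j (Finset.filter_subset _ _ hj))
    simpa [nsmul_eq_mul] using this
  have hpq' : (M.card : ℝ) + 1 ≤ (P.card : ℝ) := by exact_mod_cast hpq
  have hcard' : (P.card : ℝ) + (M.card : ℝ) = (s.card : ℝ) := by exact_mod_cast hcard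
  rw [hsplit2, hPsum2, hMsum2]
  nlinarith [mul_nonneg (by linarith : (0:ℝ) ≤ (P.card : ℝ) - (M.card : ℝ) - 1)
    (by linarith : (0:ℝ) ≤ zm + zM)]

noncomputable section

def edgeEquiv {V : Type*} (G : SimpleGraph V) :
    {p : V × V // G.Adj p.1 p.2} ≃ Σ i : V, G.neighborSet i where
  toFun p := ⟨p.1.1, p.1.2, p.2⟩
  invFun q := ⟨(q.1, q.2.1), q.2.2⟩
  left_inv p := rfl
  right_inv q := rfl

lemma summable_edge_fiber {V : Type*} (G : SimpleGraph V)
    [∀ v : V, Fintype (G.neighborSet v)] (f : V → V → ℝ)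
    (hf : Summable (fun p : {p : V × V // G.Adj p.1 p.2} => f p.1.1 p.1.2)) :
    Summable (fun i : V => ∑ j ∈ G.neighborFinset i, f i j) := by
  have hs : Summable (fun q : Σ i : V, G.neighborSet i => f q.1 q.2) := by
    have := ((edgeEquiv G).symm.summable_iff
      (f := fun p : {p : V × V // G.Adj p.1 p.2} => f p.1.1 p.1.2)).mpr hf
    exact this
  have h2 := hs.sigma
  have h3 : ∀ i : V, (∑' j : G.neighborSet i, f i j) = ∑ j ∈ G.neighborFinset i, f i j := by
    intro i
    rw [tsum_fintype]
    exact (Finset.sum_subtype _ (fun x => by simp [SimpleGraph.mem_neighborFinset,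
      SimpleGraph.mem_neighborSet]) (f i)).symm
  simpa only [h3] using h2

lemma tsum_edge {V : Type*} (G : SimpleGraph V)
    [∀ v : V, Fintype (G.neighborSet v)] (f : V → V → ℝ)
    (hf : Summable (fun p : {p : V × V // G.Adj p.1 p.2} => f p.1.1 p.1.2)) :
    ∑' p : {p : V × V // G.Adj p.1 p.2}, f p.1.1 p.1.2
      = ∑' i : V, ∑ j ∈ G.neighborFinset i, f i j := by
  have hs : Summable (fun q : Σ i : V, G.neighborSet i => f q.1 q.2) := by
    have := ((edgeEquiv G).symm.summable_iff
      (f := fun p : {p : V × V // G.Adj p.1 p.2} => f p.1.1 p.1.2)).mpr hf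
    exact this
  have h1 : ∑' p : {p : V × V // G.Adj p.1 p.2}, f p.1.1 p.1.2
      = ∑' q : Σ i : V, G.neighborSet i, f q.1 q.2 := by
    rw [← Equiv.tsum_eq (edgeEquiv G) (fun q : Σ i : V, G.neighborSet i => f q.1 q.2)]
    exact tsum_congr fun p => rfl
  rw [h1, hs.tsum_sigma]
  congr 1
  funext i
  rw [tsum_fintype]
  exact (Finset.sum_subtype _ (fun x => by simp [SimpleGraph.mem_neighborFinset,
    SimpleGraph.mem_neighborSet]) (f i)).symm
def swapEquiv {V : Type*} (G : SimpleGraph V) :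
    {p : V × V // G.Adj p.1 p.2} ≃ {p : V × V // G.Adj p.1 p.2} where
  toFun p := ⟨(p.1.2, p.1.1), p.2.symm⟩
  invFun p := ⟨(p.1.2, p.1.1), p.2.symm⟩
  left_inv := fun ⟨⟨a, b⟩, h⟩ => rfl
  right_inv := fun ⟨⟨a, b⟩, h⟩ => rfl

set_option maxHeartbeats 1000000 in
/-- If a graph with odd degrees bounded by `d` admits a summable `d`-legal
edge weighting, then under synchronous majority dynamics every opinion sequence is
eventually periodic with period at most two. -/
theorem stmt_4 {V : Type*} (G : SimpleGraph V) [∀ v : V, Fintype (G.neighborSet v)]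
    (d : ℕ) (hd : 3 ≤ d)
    (hodd : ∀ i, Odd (G.degree i)) (hdeg : ∀ i, G.degree i ≤ d)
    (z : V → V → ℝ) (hsym : ∀ i j, z i j = z j i)
    (hz01 : ∀ i j, G.Adj i j → 0 < z i j ∧ z i j ≤ 1)
    (hlegal : ∀ i j k, G.Adj i j → G.Adj i k →
      z i j / z i k < ((d : ℝ) + 1) / ((d : ℝ) - 1))
    (hzsum : Summable (fun p : {p : V × V // G.Adj p.1 p.2} => z p.1.1 p.1.2))
    (A : ℕ → V → ℤ) (hA0 : ∀ i, A 0 i = 1 ∨ A 0 i = -1)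
    (hdyn : ∀ t i, A (t + 1) i =
      if 0 < ∑ j ∈ G.neighborFinset i, A t j then 1 else -1) :
    ∀ i : V, ∃ T : ℕ, ∀ t : ℕ, T ≤ t → A (t + 2) i = A t i := by
  classical
  have hApm : ∀ t j, A t j = 1 ∨ A t j = -1 := by
    intro t j
    cases t with
    | zero => exact hA0 j
    | succ t => rw [hdyn]; split <;> simp
  have hAabs : ∀ t j, |(A t j : ℝ)| = 1 := by
    intro t j; rcases hApm t j with h | h <;> rw [h] <;> norm_num
  have hne : ∀ i : V, (G.neighborFinset i).Nonempty := by
    intro i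
    rw [← Finset.card_pos]
    exact (hodd i).pos
  -- the key sign lemma
  have key : ∀ i : V, ∃ c : ℝ, 0 < c ∧ ∀ t : ℕ,
      c ≤ (A (t+1) i : ℝ) * ∑ j ∈ G.neighborFinset i, z i j * (A t j : ℝ) := by
    intro i
    obtain ⟨jm, hjm, hjmeq⟩ := Finset.exists_mem_eq_inf' (hne i) (z i)
    obtain ⟨jM, hjM, hjMeq⟩ := Finset.exists_mem_eq_sup' (hne i) (z i)
    set zm := (G.neighborFinset i).inf' (hne i) (z i) with hzmdef
    set zM := (G.neighborFinset i).sup' (hne i) (z i) with hzMdef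
    have hmin : ∀ j ∈ G.neighborFinset i, zm ≤ z i j := fun j hj => Finset.inf'_le _ hj
    have hmax : ∀ j ∈ G.neighborFinset i, z i j ≤ zM := fun j hj => Finset.le_sup' _ hj
    have hadjm : G.Adj i jm := (SimpleGraph.mem_neighborFinset G i jm).mp hjm
    have hadjM : G.Adj i jM := (SimpleGraph.mem_neighborFinset G i jM).mp hjM
    have hzm0 : 0 < zm := by rw [hjmeq]; exact (hz01 i jm hadjm).1
    have hmm : zm ≤ zM := le_trans (hmin jm hjm) (hmax jm hjm)
    have hd1 : (0:ℝ) < (d:ℝ) - 1 := by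
      have : (3:ℝ) ≤ (d:ℝ) := by exact_mod_cast hd
      linarith
    have hdr := hlegal i jM jm hadjM hadjm
    rw [← hjmeq, ← hjMeq, div_lt_div_iff₀ hzm0 hd1] at hdr
    -- hdr : zM * ((d:ℝ)-1) < ((d:ℝ)+1) * zm
    set m := G.degree i with hmdef
    have hm1 : 1 ≤ m := (hodd i).pos
    have hmd : m ≤ d := hdeg i
    have hm1' : (1:ℝ) ≤ (m:ℝ) := by exact_mod_cast hm1
    have hmd' : (m:ℝ) ≤ (d:ℝ) := by exact_mod_cast hmd
    have hkey2 : ((m:ℝ)-1) * zM < ((m:ℝ)+1) * zm := by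
      rcases lt_or_ge m 2 with h | h
      · have hm : m = 1 := by omega
        rw [hm]
        norm_num
        linarith
      · have h2 : (2:ℝ) ≤ (m:ℝ) := by exact_mod_cast h
        nlinarith [mul_lt_mul_of_pos_left hdr (show (0:ℝ) < (m:ℝ)-1 by linarith),
          mul_nonneg (show (0:ℝ) ≤ (d:ℝ)-(m:ℝ) by linarith) hzm0.le]
    refine ⟨(((m:ℝ)+1) * zm - ((m:ℝ)-1) * zM) / 2, by linarith, ?_⟩
    intro t
    have hcard : (G.neighborFinset i).card = m := rfl
    have hoddc : Odd (G.neighborFinset i).card := by rw [hcard]; exact hodd i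
    have hne0 : ∑ j ∈ G.neighborFinset i, A t j ≠ 0 :=
      odd_pm_sum_ne_zero _ (A t) (fun j _ => hApm t j) hoddc
    by_cases hpos : 0 < ∑ j ∈ G.neighborFinset i, A t j
    · have hA1 : A (t+1) i = 1 := by rw [hdyn]; exact if_pos hpos
      rw [hA1]
      push_cast
      rw [one_mul]
      have hb := weighted_majority_bound (G.neighborFinset i) (z i) (A t) zm zM
        hzm0.le hmm hmin hmax (fun j _ => hApm t j) hpos
      rw [hcard] at hb
      exact hb
    · have hneg : ∑ j ∈ G.neighborFinset i, A t j < 0 :=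
        lt_of_le_of_ne (not_lt.mp hpos) hne0
      have hA1 : A (t+1) i = -1 := by rw [hdyn]; exact if_neg hpos
      rw [hA1]
      have hposneg : 0 < ∑ j ∈ G.neighborFinset i, (-A t j) := by
        rw [Finset.sum_neg_distrib]
        linarith
      have hb := weighted_majority_bound (G.neighborFinset i) (z i) (fun j => -A t j) zm zM
        hzm0.le hmm hmin hmax
        (fun j hj => by rcases hApm t j with h | h <;> simp [h]) hposneg
      rw [hcard] at hb
      have heq : ∑ j ∈ G.neighborFinset i, z i j * ((-A t j : ℤ) : ℝ)
          = -∑ j ∈ G.neighborFinset i, z i j * (A t j : ℝ) := by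
        rw [← Finset.sum_neg_distrib]
        refine Finset.sum_congr rfl fun j _ => ?_
        push_cast; ring
      rw [heq] at hb
      push_cast
      linarith
  intro i0
  obtain ⟨c0, hc0, hkc0⟩ := key i0
  set D : ℕ → V → ℝ := fun t i => ((A (t+2) i : ℝ) - (A t i : ℝ)) *
      ∑ j ∈ G.neighborFinset i, z i j * (A (t+1) j : ℝ) with hDdef
  have hznn : ∀ p : {p : V × V // G.Adj p.1 p.2}, 0 ≤ z p.1.1 p.1.2 :=
    fun p => (hz01 _ _ p.2).1.le
  have hsumgen : ∀ F : {p : V × V // G.Adj p.1 p.2} → ℝ,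
      (∀ p, |F p| ≤ 2 * z p.1.1 p.1.2) → Summable F :=
    fun F hF => Summable.of_norm_bounded (hzsum.mul_left 2) fun p => by
      simpa [Real.norm_eq_abs] using hF p
  have habs2 : ∀ t s : ℕ,
      Summable (fun p : {p : V × V // G.Adj p.1 p.2} =>
        z p.1.1 p.1.2 * (A t p.1.1 : ℝ) * (A s p.1.2 : ℝ)) := by
    intro t s
    refine hsumgen _ fun p => ?_
    rw [abs_mul, abs_mul, hAabs, hAabs, abs_of_nonneg (hznn p)]
    have := hznn p
    linarith
  have hsumG : ∀ t : ℕ,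
      Summable (fun p : {p : V × V // G.Adj p.1 p.2} =>
        z p.1.1 p.1.2 * (((A (t+2) p.1.1 : ℝ) - (A t p.1.1 : ℝ)) * (A (t+1) p.1.2 : ℝ))) := by
    intro t
    refine hsumgen _ fun p => ?_
    rw [abs_mul, abs_mul, hAabs, abs_of_nonneg (hznn p), mul_one]
    have h2 : |(A (t+2) p.1.1 : ℝ) - (A t p.1.1 : ℝ)| ≤ 2 := by
      rcases hApm (t+2) p.1.1 with h | h <;> rcases hApm t p.1.1 with h' | h' <;>
        rw [h, h'] <;> norm_num
    nlinarith [mul_nonneg (hznn p) (sub_nonneg.mpr h2), hznn p]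
  set E : ℕ → ℝ := fun t => ∑' p : {p : V × V // G.Adj p.1 p.2},
      z p.1.1 p.1.2 * (A (t+1) p.1.1 : ℝ) * (A t p.1.2 : ℝ) with hEdef
  have hswap : ∀ t : ℕ, E t = ∑' p : {p : V × V // G.Adj p.1 p.2},
      z p.1.1 p.1.2 * (A t p.1.1 : ℝ) * (A (t+1) p.1.2 : ℝ) := by
    intro t
    simp only [hEdef]
    rw [← Equiv.tsum_eq (swapEquiv G) (fun p : {p : V × V // G.Adj p.1 p.2} =>
      z p.1.1 p.1.2 * (A t p.1.1 : ℝ) * (A (t+1) p.1.2 : ℝ))]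
    refine tsum_congr fun p => ?_
    rcases p with ⟨⟨a, b⟩, h⟩
    show z a b * (A (t+1) a : ℝ) * (A t b : ℝ) = z b a * (A t b : ℝ) * (A (t+1) a : ℝ)
    rw [hsym a b]; ring
  have hdiffE : ∀ t : ℕ, E (t+1) - E t = ∑' i : V, D t i := by
    intro t
    have h1 : E (t+1) - E t = ∑' p : {p : V × V // G.Adj p.1 p.2},
        (z p.1.1 p.1.2 * (A (t+2) p.1.1 : ℝ) * (A (t+1) p.1.2 : ℝ)
          - z p.1.1 p.1.2 * (A t p.1.1 : ℝ) * (A (t+1) p.1.2 : ℝ)) := by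
      rw [hswap t]
      rw [Summable.tsum_sub (habs2 (t+2) (t+1)) (habs2 t (t+1))]
    rw [h1]
    rw [tsum_congr (fun p : {p : V × V // G.Adj p.1 p.2} =>
      show (z p.1.1 p.1.2 * (A (t+2) p.1.1 : ℝ) * (A (t+1) p.1.2 : ℝ)
          - z p.1.1 p.1.2 * (A t p.1.1 : ℝ) * (A (t+1) p.1.2 : ℝ))
        = z p.1.1 p.1.2 * (((A (t+2) p.1.1 : ℝ) - (A t p.1.1 : ℝ)) * (A (t+1) p.1.2 : ℝ))
        by ring)]
    rw [tsum_edge G (fun i j => z i j * (((A (t+2) i : ℝ) - (A t i : ℝ)) * (A (t+1) j : ℝ)))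
      (hsumG t)]
    refine tsum_congr fun i => ?_
    simp only [hDdef]
    rw [Finset.mul_sum]
    exact Finset.sum_congr rfl fun j _ => by ring
  have hD2 : ∀ t i, A (t+2) i ≠ A t i → ∀ c : ℝ,
      c ≤ (A (t+2) i : ℝ) * ∑ j ∈ G.neighborFinset i, z i j * (A (t+1) j : ℝ) →
      2*c ≤ D t i := by
    intro t i hne' c hc
    have h2 : (A (t+2) i : ℝ) - (A t i : ℝ) = 2 * (A (t+2) i : ℝ) := by
      have h3 : A t i = - A (t+2) i := by
        rcases hApm (t+2) i with h | h <;> rcases hApm t i with h' | h' <;> omega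
      rw [h3]; push_cast; ring
    simp only [hDdef]
    rw [h2, mul_assoc]
    linarith
  have hDnonneg : ∀ t i, 0 ≤ D t i := by
    intro t i
    by_cases h : A (t+2) i = A t i
    · simp only [hDdef]
      rw [h]
      simp
    · obtain ⟨c, hc, hkc⟩ := key i
      have := hD2 t i h c (hkc (t+1))
      linarith
  have hDsum : ∀ t, Summable (fun i : V => D t i) := by
    intro t
    have hs := summable_edge_fiber G
      (fun i j => z i j * (((A (t+2) i : ℝ) - (A t i : ℝ)) * (A (t+1) j : ℝ))) (hsumG t)
    refine hs.congr fun i => ?_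
    simp only [hDdef]
    rw [Finset.mul_sum]
    exact Finset.sum_congr rfl fun j _ => by ring
  set C : ℝ := ∑' p : {p : V × V // G.Adj p.1 p.2}, z p.1.1 p.1.2 with hCdef
  have hEbd : ∀ t, |E t| ≤ C := by
    intro t
    simp only [hEdef, hCdef]
    have h1 : Summable (fun p : {p : V × V // G.Adj p.1 p.2} =>
        ‖z p.1.1 p.1.2 * (A (t+1) p.1.1 : ℝ) * (A t p.1.2 : ℝ)‖) := by
      simpa only [Real.norm_eq_abs] using (habs2 (t+1) t).abs
    calc |∑' p : {p : V × V // G.Adj p.1 p.2},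
          z p.1.1 p.1.2 * (A (t+1) p.1.1 : ℝ) * (A t p.1.2 : ℝ)|
        ≤ ∑' p : {p : V × V // G.Adj p.1 p.2},
          ‖z p.1.1 p.1.2 * (A (t+1) p.1.1 : ℝ) * (A t p.1.2 : ℝ)‖ :=
          norm_tsum_le_tsum_norm h1
      _ ≤ ∑' p : {p : V × V // G.Adj p.1 p.2}, z p.1.1 p.1.2 := by
          refine Summable.tsum_le_tsum (fun p => ?_) h1 hzsum
          rw [Real.norm_eq_abs, abs_mul, abs_mul, hAabs, hAabs,
            abs_of_nonneg (hznn p), mul_one, mul_one]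
  have hFnn : ∀ t, 0 ≤ E (t+1) - E t := fun t => by
    rw [hdiffE t]; exact tsum_nonneg (fun i => hDnonneg t i)
  have hFb : ∀ n, ∑ t ∈ Finset.range n, (E (t+1) - E t) ≤ 2*C := by
    intro n
    rw [Finset.sum_range_sub (f := E)]
    have h1 := abs_le.mp (hEbd n)
    have h2 := abs_le.mp (hEbd 0)
    linarith [h1.1, h1.2, h2.1, h2.2]
  have hFsum : Summable (fun t => E (t+1) - E t) := summable_of_sum_range_le hFnn hFb
  have hDle : ∀ t, D t i0 ≤ E (t+1) - E t := fun t => by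
    rw [hdiffE t]; exact Summable.le_tsum (hDsum t) i0 (fun j _ => hDnonneg t j)
  have hDs : Summable (fun t => D t i0) :=
    Summable.of_nonneg_of_le (fun t => hDnonneg t i0) hDle hFsum
  have hev : ∀ᶠ t in Filter.atTop, D t i0 < 2*c0 :=
    Filter.Tendsto.eventually_lt_const (by linarith : (0:ℝ) < 2*c0)
      hDs.tendsto_atTop_zero
  obtain ⟨T, hT⟩ := Filter.eventually_atTop.mp hev
  refine ⟨T, fun t ht => ?_⟩
  by_contra hne'
  exact absurd (hD2 t i0 hne' c0 (hkc0 (t+1))) (not_le.mpr (hT t ht))
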